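/- arXiv:0806.3380 — 2 statements merged into one kernel-verified Lean document; each statement's English description precedes it below -/
import Mathlib

section
/- Let C be a triangulated category with a weight structure w, and let M be an object admitting a weight filtration M_{≤-2} →a M →b M_{≥0} →c M_{≤-2}[1] avoiding weight -1 (M_{≤-2} ∈ C_{w≤-2}, M_{≥0} ∈ C_{w≥0}). Then every weight filtration A → M → B → A[1] of M with A ∈ C_{w≤-1} and B ∈ C_{w≥0} is isomorphic, via an isomorphism of triangles extending the identity of M, to the direct sum of the triangle M_{≤-2} →a M →b M_{≥0} →c M_{≤-2}[1] and a contractible triangle M₀[-1] → 0 → M₀ →id M₀ for some object M₀ of the heart C_{w=0}. -/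
open CategoryTheory CategoryTheory.Limits CategoryTheory.Pretriangulated

universe v u

/-- The shift `S[n]` of a class of objects `S`: the objects isomorphic to `A⟦n⟧`
for some `A ∈ S`. -/
def shiftedSet {C : Type u} [Category.{v} C] [HasShift C ℤ] (S : Set C) (n : ℤ) : Set C :=
  {X | ∃ A ∈ S, Nonempty (X ≅ A⟦n⟧)}

/-- A weight structure on a pretriangulated category `C`, following Bondarko. -/
structure WeightStructure (C : Type u) [Category.{v} C] [Preadditive C] [HasZeroObject C]
    [HasShift C ℤ] [∀ n : ℤ, (shiftFunctor C n).Additive] [Pretriangulated C] where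
  /-- the objects of weights `≤ 0` -/
  le : Set C
  /-- the objects of weights `≥ 0` -/
  ge : Set C
  /-- `C_{w ≤ 0}` is closed under retracts -/
  retract_le : ∀ (X M : C) (i : X ⟶ M) (r : M ⟶ X), i ≫ r = 𝟙 X → M ∈ le → X ∈ le
  /-- `C_{w ≥ 0}` is closed under retracts -/
  retract_ge : ∀ (X M : C) (i : X ⟶ M) (r : M ⟶ X), i ≫ r = 𝟙 X → M ∈ ge → X ∈ ge
  /-- `C_{w ≤ 0} ⊆ C_{w ≤ 1}` -/
  le_shift : le ⊆ shiftedSet le 1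
  /-- `C_{w ≥ 1} ⊆ C_{w ≥ 0}` -/
  ge_shift : shiftedSet ge 1 ⊆ ge
  /-- orthogonality -/
  orth : ∀ (M N : C), M ∈ le → N ∈ shiftedSet ge 1 → ∀ f : M ⟶ N, f = 0
  /-- existence of weight filtrations -/
  exists_wf : ∀ M : C, ∃ (A B : C) (a : A ⟶ M) (b : M ⟶ B) (δ : B ⟶ A⟦(1:ℤ)⟧),
    Triangle.mk a b δ ∈ (distTriang C) ∧ A ∈ le ∧ B ∈ shiftedSet ge 1

namespace WeightStructure

variable {C : Type u} [Category.{v} C] [Preadditive C] [HasZeroObject C]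
  [HasShift C ℤ] [∀ n : ℤ, (shiftFunctor C n).Additive] [Pretriangulated C]

/-- `C_{w ≤ n} := C_{w ≤ 0}[n]`. -/
def wLE (w : WeightStructure C) (n : ℤ) : Set C := shiftedSet w.le n

/-- `C_{w ≥ n} := C_{w ≥ 0}[n]`. -/
def wGE (w : WeightStructure C) (n : ℤ) : Set C := shiftedSet w.ge n

/-- The heart `C_{w = 0} := C_{w ≤ 0} ∩ C_{w ≥ 0}`. -/
def heart (w : WeightStructure C) : Set C := w.le ∩ w.ge

/-- An object `M` is without weights `m, …, n` if it admits a weight filtration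
avoiding these weights. -/
def WithoutWeights (w : WeightStructure C) (m n : ℤ) (M : C) : Prop :=
  ∃ (A B : C) (a : A ⟶ M) (b : M ⟶ B) (δ : B ⟶ A⟦(1:ℤ)⟧),
    Triangle.mk a b δ ∈ (distTriang C) ∧ A ∈ w.wLE (m - 1) ∧ B ∈ w.wGE (n + 1)

end WeightStructure

set_option linter.unusedSectionVars false

section Aux

variable {C : Type u} [Category.{v} C] [Preadditive C] [HasZeroObject C]
  [HasShift C ℤ] [∀ n : ℤ, (shiftFunctor C n).Additive] [Pretriangulated C]

lemma mem_shiftedSet_zero {S : Set C} {X : C} (h : X ∈ S) : X ∈ shiftedSet S 0 :=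
  ⟨X, h, ⟨((shiftFunctorZero C ℤ).app X).symm⟩⟩

lemma shiftedSet.mem_of_iso {S : Set C} {X Y : C} (e : X ≅ Y) {n : ℤ}
    (h : Y ∈ shiftedSet S n) : X ∈ shiftedSet S n := by
  obtain ⟨L, hL, ⟨e'⟩⟩ := h
  exact ⟨L, hL, ⟨e ≪≫ e'⟩⟩

lemma shiftedSet.shift_mem {S : Set C} {X : C} {m : ℤ} (h : X ∈ shiftedSet S m)
    (k n : ℤ) (hn : m + k = n) : (X⟦k⟧ : C) ∈ shiftedSet S n := by
  obtain ⟨L, hL, ⟨e⟩⟩ := h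
  exact ⟨L, hL, ⟨(shiftFunctor C k).mapIso e ≪≫ ((shiftFunctorAdd' C m k n hn).symm.app L)⟩⟩

open WalkingPair in
/-- The product over `WalkingPair` identifies with the binary biproduct. -/
noncomputable def prodPairIso (f : WalkingPair → C) : (∏ᶜ f) ≅ f left ⊞ f right where
  hom := biprod.lift (Pi.π f left) (Pi.π f right)
  inv := Pi.lift (fun j => WalkingPair.casesOn j biprod.fst biprod.snd)
  hom_inv_id := by
    apply Pi.hom_ext
    rintro (_ | _) <;> simp
  inv_hom_id := by
    apply biprod.hom_ext <;> simp

@[simp] lemma prodPairIso_hom (f : WalkingPair → C) :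
    (prodPairIso f).hom = biprod.lift (Pi.π f .left) (Pi.π f .right) := rfl

@[simp] lemma prodPairIso_inv (f : WalkingPair → C) :
    (prodPairIso f).inv = Pi.lift (fun j => WalkingPair.casesOn j biprod.fst biprod.snd) := rfl

/-- The direct sum of two distinguished triangles is distinguished. -/
lemma binarySumTriangle_distinguished (T₁ T₂ : Triangle C)
    (h₁ : T₁ ∈ distTriang C) (h₂ : T₂ ∈ distTriang C) :
    Triangle.mk (biprod.map T₁.mor₁ T₂.mor₁) (biprod.map T₁.mor₂ T₂.mor₂)
      (biprod.desc (T₁.mor₃ ≫ (shiftFunctor C (1:ℤ)).map biprod.inl)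
        (T₂.mor₃ ≫ (shiftFunctor C (1:ℤ)).map biprod.inr)) ∈ distTriang C := by
  let Tf : WalkingPair → Triangle C := fun j => WalkingPair.casesOn j T₁ T₂
  have hprod : productTriangle Tf ∈ distTriang C :=
    productTriangle_distinguished Tf (by rintro (_ | _) <;> assumption)
  refine Pretriangulated.isomorphic_distinguished _ hprod _ ?_
  refine Triangle.isoMk _ _ (prodPairIso (fun j => (Tf j).obj₁)).symm
    (prodPairIso (fun j => (Tf j).obj₂)).symm (prodPairIso (fun j => (Tf j).obj₃)).symm
    ?_ ?_ ?_
  · change biprod.map T₁.mor₁ T₂.mor₁ ≫ (prodPairIso (fun j => (Tf j).obj₂)).inv =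
      (prodPairIso (fun j => (Tf j).obj₁)).inv ≫ Limits.Pi.map (fun j => (Tf j).mor₁)
    apply Pi.hom_ext
    rintro (_ | _) <;> simp [Tf]
  · change biprod.map T₁.mor₂ T₂.mor₂ ≫ (prodPairIso (fun j => (Tf j).obj₃)).inv =
      (prodPairIso (fun j => (Tf j).obj₂)).inv ≫ Limits.Pi.map (fun j => (Tf j).mor₂)
    apply Pi.hom_ext
    rintro (_ | _) <;> simp [Tf]
  · change biprod.desc (T₁.mor₃ ≫ (shiftFunctor C (1:ℤ)).map biprod.inl)
        (T₂.mor₃ ≫ (shiftFunctor C (1:ℤ)).map biprod.inr) ≫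
        (shiftFunctor C (1:ℤ)).map (prodPairIso (fun j => (Tf j).obj₁)).inv =
      (prodPairIso (fun j => (Tf j).obj₃)).inv ≫
        (Limits.Pi.map (fun j => (Tf j).mor₃) ≫ inv (piComparison _ _))
    rw [← cancel_mono (piComparison (shiftFunctor C (1:ℤ)) (fun j => (Tf j).obj₁))]
    rw [Category.assoc, Category.assoc, Category.assoc, IsIso.inv_hom_id, Category.comp_id]
    apply Pi.hom_ext
    rintro (_ | _) <;>
    · simp only [Category.assoc, piComparison_comp_π, ← Functor.map_comp, limMap_π]
      apply biprod.hom_ext' <;>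
        simp [Tf, ← Functor.map_comp]

namespace WeightStructure

variable (w : WeightStructure C)

lemma mem_ge_of_iso {X Y : C} (e : X ≅ Y) (h : Y ∈ w.ge) : X ∈ w.ge :=
  w.retract_ge X Y e.hom e.inv e.hom_inv_id h

lemma mem_le_of_iso {X Y : C} (e : X ≅ Y) (h : Y ∈ w.le) : X ∈ w.le :=
  w.retract_le X Y e.hom e.inv e.hom_inv_id h

lemma ge_shift_natCast {G : C} (hG : G ∈ w.ge) (k : ℕ) : (G⟦(k : ℤ)⟧ : C) ∈ w.ge := by
  induction k with
  | zero => exact w.mem_ge_of_iso ((shiftFunctorZero C ℤ).app G) hG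
  | succ k ih =>
      refine w.mem_ge_of_iso ((shiftFunctorAdd' C (k : ℤ) 1 ((k : ℤ)+1) rfl).app G) ?_
      exact w.ge_shift ⟨G⟦(k : ℤ)⟧, ih, ⟨Iso.refl _⟩⟩

lemma ge_shift_nonneg {G : C} (hG : G ∈ w.ge) (k : ℤ) (hk : 0 ≤ k) : (G⟦k⟧ : C) ∈ w.ge := by
  obtain ⟨k, rfl⟩ := Int.eq_ofNat_of_zero_le hk
  exact w.ge_shift_natCast hG k

lemma hom_zero {X Y : C} {m n : ℤ} (hX : X ∈ shiftedSet w.le m)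
    (hY : Y ∈ shiftedSet w.ge n) (hmn : m < n) (φ : X ⟶ Y) : φ = 0 := by
  obtain ⟨L, hL, ⟨e⟩⟩ := hX
  obtain ⟨G, hG, ⟨e'⟩⟩ := hY
  suffices h : e.inv ≫ φ ≫ e'.hom = 0 by
    have h2 : φ = e.hom ≫ (e.inv ≫ φ ≫ e'.hom) ≫ e'.inv := by simp
    rw [h2, h, zero_comp, comp_zero]
  set ψ : (L⟦m⟧ : C) ⟶ (G⟦n⟧ : C) := e.inv ≫ φ ≫ e'.hom with hψdef
  have htgt : (G⟦n - m⟧ : C) ∈ shiftedSet w.ge 1 :=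
    ⟨G⟦n - m - 1⟧, w.ge_shift_nonneg hG _ (by omega),
      ⟨(shiftFunctorAdd' C (n-m-1) 1 (n-m) (by ring)).app G⟩⟩
  set i₁ : ((L⟦m⟧ : C)⟦-m⟧ : C) ≅ L := (shiftFunctorCompIsoId C m (-m) (by omega)).app L
  set i₂ : ((G⟦n⟧ : C)⟦-m⟧ : C) ≅ (G⟦n - m⟧ : C) :=
    ((shiftFunctorAdd' C n (-m) (n-m) (by omega)).symm.app G)
  have key : i₁.inv ≫ (shiftFunctor C (-m)).map ψ ≫ i₂.hom = 0 :=
    w.orth L _ hL htgt _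
  have hψm : (shiftFunctor C (-m)).map ψ = 0 := by
    have h3 : (shiftFunctor C (-m)).map ψ =
        i₁.hom ≫ (i₁.inv ≫ (shiftFunctor C (-m)).map ψ ≫ i₂.hom) ≫ i₂.inv := by simp
    rw [h3, key, zero_comp, comp_zero]
  have := (shiftFunctor C (-m)).map_injective (by rw [hψm, Functor.map_zero] :
    (shiftFunctor C (-m)).map ψ = (shiftFunctor C (-m)).map 0)
  exact this

end WeightStructure

end Aux

open ZeroObject

/-- Minimality of a weight filtration avoiding weight `-1`: any weight filtration of `M`
at the cut `(-1, 0)` is isomorphic, by an isomorphism of triangles extending `𝟙 M`, to the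
direct sum of the given filtration avoiding weight `-1` and a contractible triangle
`M₀⟦-1⟧ ⟶ 0 ⟶ M₀ ⟶ M₀` for some object `M₀` of the heart. -/
theorem weightFiltration_isoDirectSum
    {C : Type u} [Category.{v} C] [Preadditive C] [HasZeroObject C]
    [HasShift C ℤ] [∀ n : ℤ, (shiftFunctor C n).Additive] [Pretriangulated C]
    (w : WeightStructure C) (M A₂ B₀ : C)
    (a : A₂ ⟶ M) (b : M ⟶ B₀) (c : B₀ ⟶ A₂⟦(1:ℤ)⟧)
    (hT : Triangle.mk a b c ∈ distTriang C)
    (hA₂ : A₂ ∈ w.wLE (-2)) (hB₀ : B₀ ∈ w.ge)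
    (A B : C) (a' : A ⟶ M) (b' : M ⟶ B) (c' : B ⟶ A⟦(1:ℤ)⟧)
    (hT' : Triangle.mk a' b' c' ∈ distTriang C)
    (hA : A ∈ w.wLE (-1)) (hB : B ∈ w.ge) :
    ∃ (M₀ : C) (_ : M₀ ∈ w.heart)
      (eA : A ≅ A₂ ⊞ (M₀⟦(-1:ℤ)⟧)) (eB : B ≅ B₀ ⊞ M₀),
      a' = eA.hom ≫ biprod.desc a 0 ∧
      b' ≫ eB.hom = biprod.lift b 0 ∧
      c' ≫ (shiftFunctor C (1:ℤ)).map eA.hom =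
        eB.hom ≫ biprod.desc (c ≫ (shiftFunctor C (1:ℤ)).map biprod.inl)
          ((shiftFunctorCompIsoId C (-1 : ℤ) (1 : ℤ) (by norm_num)).inv.app M₀ ≫
            (shiftFunctor C (1:ℤ)).map biprod.inr) := by
  have hA₂' : A₂ ∈ shiftedSet w.le (-2) := hA₂
  have hA' : A ∈ shiftedSet w.le (-1) := hA
  have hBge : B ∈ shiftedSet w.ge 0 := mem_shiftedSet_zero hB
  have hB₀ge : B₀ ∈ shiftedSet w.ge 0 := mem_shiftedSet_zero hB₀
  -- the morphism of triangles (f', 𝟙, g') from the second triangle to the first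
  obtain ⟨f', hf'⟩ : ∃ f' : A ⟶ A₂, a' = f' ≫ a := Triangle.coyoneda_exact₂ _ hT a'
    (w.hom_zero hA' hB₀ge (by omega) _)
  obtain ⟨g', hg'₁, hg'₂⟩ : ∃ g' : B ⟶ B₀, b' ≫ g' = 𝟙 M ≫ b ∧
      c' ≫ (shiftFunctor C (1:ℤ)).map f' = g' ≫ c := complete_distinguished_triangle_morphism
    (Triangle.mk a' b' c') (Triangle.mk a b c) hT' hT f' (𝟙 M) (by change a' ≫ 𝟙 M = f' ≫ a; rw [Category.comp_id]; exact hf')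
  rw [Category.id_comp] at hg'₁
  -- the morphism of triangles (f, 𝟙, g) from the first triangle to the second
  obtain ⟨f, hf⟩ : ∃ f : A₂ ⟶ A, a = f ≫ a' := Triangle.coyoneda_exact₂ _ hT' a
    (w.hom_zero hA₂' hBge (by omega) _)
  obtain ⟨g, hg₁, hg₂⟩ : ∃ g : B₀ ⟶ B, b ≫ g = 𝟙 M ≫ b' ∧
      c ≫ (shiftFunctor C (1:ℤ)).map f = g ≫ c' := complete_distinguished_triangle_morphism
    (Triangle.mk a b c) (Triangle.mk a' b' c') hT hT' f (𝟙 M) (by change a ≫ 𝟙 M = f ≫ a'; rw [Category.comp_id]; exact hf)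
  rw [Category.id_comp] at hg₁
  -- g ≫ g' = 𝟙 B₀
  have hgg' : g ≫ g' = 𝟙 B₀ := by
    have hz : b ≫ (g ≫ g' - 𝟙 B₀) = 0 := by
      rw [Preadditive.comp_sub, Category.comp_id, ← Category.assoc, hg₁, hg'₁, sub_self]
    obtain ⟨k, hk⟩ := Triangle.yoneda_exact₂ _ (rot_of_distTriang _ hT)
      ((g ≫ g' - 𝟙 B₀ : B₀ ⟶ B₀)) (by exact hz)
    have hk0 : k = 0 :=
      w.hom_zero (shiftedSet.shift_mem hA₂' 1 (-1) (by omega)) hB₀ge (by omega) k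
    rw [hk0, comp_zero] at hk
    rw [← sub_eq_zero]
    exact hk
  -- f ≫ f' = 𝟙 A₂
  have hff' : f ≫ f' = 𝟙 A₂ := by
    have hz : (f ≫ f' - 𝟙 A₂) ≫ a = 0 := by
      rw [Preadditive.sub_comp, Category.id_comp, Category.assoc, ← hf', ← hf, sub_self]
    obtain ⟨k, hk⟩ := Triangle.coyoneda_exact₂ _ (inv_rot_of_distTriang _ hT)
      ((f ≫ f' - 𝟙 A₂ : A₂ ⟶ A₂)) (by exact hz)
    have hk0 : k = 0 :=
      w.hom_zero hA₂' (shiftedSet.shift_mem hB₀ge (-1) (-1) (by omega)) (by omega) k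
    rw [hk0, zero_comp] at hk
    rw [← sub_eq_zero]
    exact hk
  -- the cone of g
  obtain ⟨M₀, p, δ, hTg⟩ := Pretriangulated.distinguished_cocone_triangle g
  have hgp : g ≫ p = 0 := comp_distTriang_mor_zero₁₂ _ hTg
  have hδ : δ = 0 := by
    have h1 : δ ≫ (shiftFunctor C (1:ℤ)).map g = 0 := comp_distTriang_mor_zero₃₁ _ hTg
    calc δ = δ ≫ (shiftFunctor C (1:ℤ)).map (g ≫ g') := by rw [hgg']; simp
    _ = (δ ≫ (shiftFunctor C (1:ℤ)).map g) ≫ (shiftFunctor C (1:ℤ)).map g' := by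
        rw [Functor.map_comp, Category.assoc]
    _ = 0 := by rw [h1, zero_comp]
  -- B ≅ B₀ ⊞ M₀
  have hb'p : b' ≫ p = 0 := by
    rw [show b' = b ≫ g from hg₁.symm, Category.assoc, hgp, comp_zero]
  have hiso3 : IsIso (biprod.lift g' p) := by
    have h3 : IsIso (𝟙 B₀) := inferInstance
    have h4 : IsIso (𝟙 M₀) := inferInstance
    exact Pretriangulated.isIso₂_of_isIso₁₃
      (⟨𝟙 B₀, biprod.lift g' p, 𝟙 M₀,
        by change g ≫ biprod.lift g' p = 𝟙 B₀ ≫ biprod.inl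
           apply biprod.hom_ext <;> simp [hgg', hgp],
        by change p ≫ 𝟙 M₀ = biprod.lift g' p ≫ biprod.snd; simp,
        by change δ ≫ (shiftFunctor C (1:ℤ)).map (𝟙 B₀) = 𝟙 M₀ ≫ 0; simp [hδ]⟩ : Triangle.mk g p δ ⟶ binaryBiproductTriangle B₀ M₀)
      hTg (binaryBiproductTriangle_distinguished B₀ M₀) h3 h4
  -- the map q : A ⟶ M₀⟦-1⟧
  obtain ⟨s, hs⟩ : ∃ s : (A⟦(1:ℤ)⟧ : C) ⟶ M₀, p = c' ≫ s :=
    Triangle.yoneda_exact₂ _ (rot_of_distTriang _ hT') p (by exact hb'p)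
  set q : A ⟶ (M₀⟦(-1:ℤ)⟧ : C) :=
    (shiftFunctorCompIsoId C (1:ℤ) (-1:ℤ) (by omega)).inv.app A ≫
      (shiftFunctor C (-1:ℤ)).map s with hqdef
  have hq : c' ≫ (shiftFunctor C (1:ℤ)).map q =
      p ≫ (shiftFunctorCompIsoId C (-1 : ℤ) (1 : ℤ) (by norm_num)).inv.app M₀ := by
    have h1 : (shiftFunctor C (1:ℤ)).map
        ((shiftFunctorCompIsoId C (1:ℤ) (-1:ℤ) (by omega)).inv.app A) =
        (shiftFunctorCompIsoId C (-1:ℤ) (1:ℤ) (by norm_num)).inv.app (A⟦(1:ℤ)⟧) :=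
      shift_shiftFunctorCompIsoId_inv_app (1:ℤ) (-1:ℤ) (by omega) A
    have h2 := (shiftFunctorCompIsoId C (-1:ℤ) (1:ℤ) (by norm_num)).inv.naturality s
    dsimp at h2
    rw [hqdef, Functor.map_comp, h1, ← h2, hs, Category.assoc]
  -- the contractible triangle M₀⟦-1⟧ ⟶ 0 ⟶ M₀ ⟶ M₀⟦-1⟧⟦1⟧
  have hT₀ : Triangle.mk (0 : (M₀⟦(-1:ℤ)⟧ : C) ⟶ (0:C)) (0 : (0:C) ⟶ M₀)
      ((shiftFunctorCompIsoId C (-1 : ℤ) (1 : ℤ) (by norm_num)).inv.app M₀) ∈ distTriang C := by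
    refine Pretriangulated.isomorphic_distinguished _
      (contractible_distinguished₂ ((M₀⟦(-1:ℤ)⟧ : C))) _ ?_
    exact Triangle.isoMk _ _ (Iso.refl _) (Iso.refl _)
      (((shiftFunctorCompIsoId C (-1:ℤ) (1:ℤ) (by norm_num)).app M₀).symm)
      (by exact zero_comp.trans comp_zero.symm) (by exact zero_comp.trans comp_zero.symm)
      (by change (shiftFunctorCompIsoId C (-1:ℤ) (1:ℤ) (by norm_num)).inv.app M₀ ≫
            (shiftFunctor C (1:ℤ)).map (𝟙 ((M₀⟦(-1:ℤ)⟧ : C))) =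
          (shiftFunctorCompIsoId C (-1:ℤ) (1:ℤ) (by norm_num)).inv.app M₀ ≫
            𝟙 (((M₀⟦(-1:ℤ)⟧ : C))⟦(1:ℤ)⟧)
          simp)
  -- the direct sum triangle is distinguished
  have hTsum := binarySumTriangle_distinguished (Triangle.mk a b c)
    (Triangle.mk (0 : (M₀⟦(-1:ℤ)⟧ : C) ⟶ (0:C)) (0 : (0:C) ⟶ M₀)
      ((shiftFunctorCompIsoId C (-1 : ℤ) (1 : ℤ) (by norm_num)).inv.app M₀)) hT hT₀
  change Triangle.mk (biprod.map a (0 : (M₀⟦(-1:ℤ)⟧ : C) ⟶ (0:C)))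
    (biprod.map b (0 : (0:C) ⟶ M₀))
    (biprod.desc (c ≫ (shiftFunctor C (1:ℤ)).map biprod.inl)
      ((shiftFunctorCompIsoId C (-1 : ℤ) (1 : ℤ) (by norm_num)).inv.app M₀ ≫
        (shiftFunctor C (1:ℤ)).map biprod.inr)) ∈ distTriang C at hTsum
  -- the target triangle is distinguished
  have hTt : Triangle.mk (biprod.desc a (0 : (M₀⟦(-1:ℤ)⟧ : C) ⟶ M))
      (biprod.lift b (0 : M ⟶ M₀))
      (biprod.desc (c ≫ (shiftFunctor C (1:ℤ)).map biprod.inl)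
        ((shiftFunctorCompIsoId C (-1 : ℤ) (1 : ℤ) (by norm_num)).inv.app M₀ ≫
          (shiftFunctor C (1:ℤ)).map biprod.inr)) ∈ distTriang C := by
    refine Pretriangulated.isomorphic_distinguished _ hTsum _ ?_
    refine Triangle.isoMk _ _ (Iso.refl _)
      (⟨biprod.inl, biprod.fst, by simp, ?_⟩ : M ≅ M ⊞ (0:C)) (Iso.refl _) ?_ ?_ ?_
    · apply biprod.hom_ext
      · simp
      · exact (isZero_zero C).eq_of_tgt _ _
    · change biprod.desc a (0 : (M₀⟦(-1:ℤ)⟧ : C) ⟶ M) ≫ biprod.inl =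
        𝟙 (A₂ ⊞ (M₀⟦(-1:ℤ)⟧ : C)) ≫ biprod.map a (0 : (M₀⟦(-1:ℤ)⟧ : C) ⟶ (0:C))
      apply biprod.hom_ext' <;> simp
    · change biprod.lift b (0 : M ⟶ M₀) ≫ 𝟙 (B₀ ⊞ M₀) =
        biprod.inl ≫ biprod.map b (0 : (0:C) ⟶ M₀)
      apply biprod.hom_ext <;> simp
    · change biprod.desc (c ≫ (shiftFunctor C (1:ℤ)).map biprod.inl)
            ((shiftFunctorCompIsoId C (-1 : ℤ) (1 : ℤ) (by norm_num)).inv.app M₀ ≫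
              (shiftFunctor C (1:ℤ)).map biprod.inr) ≫
          (shiftFunctor C (1:ℤ)).map (𝟙 (A₂ ⊞ (M₀⟦(-1:ℤ)⟧ : C))) =
        𝟙 (B₀ ⊞ M₀) ≫ biprod.desc (c ≫ (shiftFunctor C (1:ℤ)).map biprod.inl)
            ((shiftFunctorCompIsoId C (-1 : ℤ) (1 : ℤ) (by norm_num)).inv.app M₀ ≫
              (shiftFunctor C (1:ℤ)).map biprod.inr)
      simp
  -- the comparison morphism of triangles
  have comm1 : a' = biprod.lift f' q ≫ biprod.desc a (0 : (M₀⟦(-1:ℤ)⟧ : C) ⟶ M) := by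
    rw [biprod.lift_desc, comp_zero, add_zero, ← hf']
  have comm2 : b' ≫ biprod.lift g' p = biprod.lift b (0 : M ⟶ M₀) := by
    apply biprod.hom_ext <;> simp [hg'₁, hb'p]
  have comm3 : c' ≫ (shiftFunctor C (1:ℤ)).map (biprod.lift f' q) =
      biprod.lift g' p ≫ biprod.desc (c ≫ (shiftFunctor C (1:ℤ)).map biprod.inl)
        ((shiftFunctorCompIsoId C (-1 : ℤ) (1 : ℤ) (by norm_num)).inv.app M₀ ≫
          (shiftFunctor C (1:ℤ)).map biprod.inr) := by
    rw [biprod.lift_desc, biprod.lift_eq, Functor.map_add, Functor.map_comp, Functor.map_comp,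
      Preadditive.comp_add, ← Category.assoc c', hg'₂, ← Category.assoc c', hq]
    simp only [Category.assoc]
  have hφ : IsIso (biprod.lift f' q) := by
    have h2 : IsIso (𝟙 M) := inferInstance
    exact Pretriangulated.isIso₁_of_isIso₂₃
      (⟨biprod.lift f' q, 𝟙 M, biprod.lift g' p,
        by change a' ≫ 𝟙 M = biprod.lift f' q ≫ biprod.desc a (0 : (M₀⟦(-1:ℤ)⟧ : C) ⟶ M)
           simpa using comm1,
        by change b' ≫ biprod.lift g' p = 𝟙 M ≫ biprod.lift b (0 : M ⟶ M₀)
           simpa using comm2, by exact comm3⟩ :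
          Triangle.mk a' b' c' ⟶ Triangle.mk _ _ _)
      hT' hTt h2 hiso3
  -- membership of M₀ in the heart
  have hM₀ge : M₀ ∈ w.ge := by
    refine w.retract_ge M₀ B (biprod.inr ≫ inv (biprod.lift g' p))
      (biprod.lift g' p ≫ biprod.snd) ?_ hB
    rw [Category.assoc, IsIso.inv_hom_id_assoc, biprod.inr_snd]
  have hM₀le : M₀ ∈ w.le := by
    obtain ⟨L, hL, ⟨eL⟩⟩ := hA'
    have hretr : (biprod.inr ≫ inv (biprod.lift f' q)) ≫ (biprod.lift f' q ≫ biprod.snd) =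
        𝟙 ((M₀⟦(-1:ℤ)⟧ : C)) := by
      rw [Category.assoc, IsIso.inv_hom_id_assoc, biprod.inr_snd]
    refine w.retract_le M₀ L
      ((shiftFunctorCompIsoId C (-1:ℤ) (1:ℤ) (by norm_num)).inv.app M₀ ≫
        (shiftFunctor C (1:ℤ)).map ((biprod.inr ≫ inv (biprod.lift f' q)) ≫ eL.hom) ≫
        (shiftFunctorCompIsoId C (-1:ℤ) (1:ℤ) (by norm_num)).hom.app L)
      ((shiftFunctorCompIsoId C (-1:ℤ) (1:ℤ) (by norm_num)).inv.app L ≫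
        (shiftFunctor C (1:ℤ)).map (eL.inv ≫ (biprod.lift f' q ≫ biprod.snd)) ≫
        (shiftFunctorCompIsoId C (-1:ℤ) (1:ℤ) (by norm_num)).hom.app M₀) ?_ hL
    calc _ = (shiftFunctorCompIsoId C (-1:ℤ) (1:ℤ) (by norm_num)).inv.app M₀ ≫
        (shiftFunctor C (1:ℤ)).map (((biprod.inr ≫ inv (biprod.lift f' q)) ≫ eL.hom) ≫
          (eL.inv ≫ (biprod.lift f' q ≫ biprod.snd))) ≫
        (shiftFunctorCompIsoId C (-1:ℤ) (1:ℤ) (by norm_num)).hom.app M₀ := by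
          simp only [Functor.map_comp, Category.assoc, Iso.hom_inv_id_app_assoc]
    _ = 𝟙 _ := by
          rw [show ((biprod.inr ≫ inv (biprod.lift f' q)) ≫ eL.hom) ≫
              (eL.inv ≫ (biprod.lift f' q ≫ biprod.snd)) = 𝟙 _ from by
            simp only [Category.assoc, Iso.hom_inv_id_assoc, IsIso.inv_hom_id_assoc,
              biprod.inr_snd]]
          simp
  refine ⟨M₀, ⟨hM₀le, hM₀ge⟩, asIso (biprod.lift f' q), asIso (biprod.lift g' p),
    by simpa using comm1, by simpa using comm2, by simpa using comm3⟩
end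

section
/- Let C be a triangulated category with a weight structure w, and let m, n be integers with m ≤ n. Suppose M admits a weight filtration M_{≤m-1} →x_- M →x_+ M_{≥n+1} → M_{≤m-1}[1] avoiding weights m,…,n, and N admits a weight filtration N_{≤m-1} →y_- N →y_+ N_{≥n+1} → N_{≤m-1}[1] avoiding weights m,…,n. Then for every morphism α : M → N: (i) the composition y_+ ∘ α ∘ x_- : M_{≤m-1} → N_{≥n+1} is zero; (ii) α ∘ x_- factors uniquely through y_- (there is a unique β : M_{≤m-1} → N_{≤m-1} with y_- ∘ β = α ∘ x_-); and (iii) y_+ ∘ α factors uniquely through x_+ (there is a unique γ : M_{≥n+1} → N_{≥n+1} with γ ∘ x_+ = y_+ ∘ α). -/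
open CategoryTheory CategoryTheory.Limits CategoryTheory.Pretriangulated

universe v u

section Aux

set_option linter.unusedSectionVars false

variable {C : Type u} [Category.{v} C] [Preadditive C] [HasZeroObject C]
  [HasShift C ℤ] [∀ n : ℤ, (shiftFunctor C n).Additive] [Pretriangulated C]

lemma shiftedSet_shift {S : Set C} {a : ℤ} (k c : ℤ) (h : a + k = c) {X : C}
    (hX : X ∈ shiftedSet S a) : X⟦k⟧ ∈ shiftedSet S c := by
  obtain ⟨A, hA, ⟨e⟩⟩ := hX
  exact ⟨A, hA, ⟨(shiftFunctor C k).mapIso e ≪≫ ((shiftFunctorAdd' C a k c h).symm.app A)⟩⟩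

lemma WeightStructure.ge_isoClosed (w : WeightStructure C) {X Y : C} (e : X ≅ Y)
    (hY : Y ∈ w.ge) : X ∈ w.ge :=
  w.retract_ge X Y e.hom e.inv e.hom_inv_id hY

lemma WeightStructure.ge_natShift (w : WeightStructure C) {B : C} (hB : B ∈ w.ge) (k : ℕ) :
    B⟦(k : ℤ)⟧ ∈ w.ge := by
  induction k with
  | zero => exact w.ge_isoClosed ((shiftFunctorZero C ℤ).app B) hB
  | succ k ih =>
      exact w.ge_shift ⟨B⟦(k : ℤ)⟧, ih,
        ⟨(shiftFunctorAdd' C (k : ℤ) 1 ((k + 1 : ℕ) : ℤ) (by push_cast; ring)).app B⟩⟩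

lemma WeightStructure.hom_vanish (w : WeightStructure C) {a b : ℤ} (hab : a < b)
    {A B : C} (hA : A ∈ w.wLE a) (hB : B ∈ w.wGE b) (f : A ⟶ B) : f = 0 := by
  obtain ⟨A₀, hA₀, ⟨eA⟩⟩ := hA
  obtain ⟨B₀, hB₀, ⟨eB⟩⟩ := hB
  have hmem : (B₀⟦b - a⟧ : C) ∈ shiftedSet w.ge 1 := by
    refine ⟨B₀⟦b - a - 1⟧, ?_, ⟨(shiftFunctorAdd' C (b - a - 1) 1 (b - a) (by ring)).app B₀⟩⟩
    have h1 : ((b - a - 1).toNat : ℤ) = b - a - 1 := Int.toNat_of_nonneg (by omega)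
    have := w.ge_natShift hB₀ (b - a - 1).toNat
    rwa [h1] at this
  set g : A₀ ⟶ B₀⟦b - a⟧ :=
    (shiftFunctorCompIsoId C a (-a) (by ring)).inv.app A₀ ≫
      (shiftFunctor C (-a)).map (eA.inv ≫ f ≫ eB.hom) ≫
      (shiftFunctorAdd' C b (-a) (b - a) (by ring)).inv.app B₀ with hg
  have hg0 : g = 0 := w.orth _ _ hA₀ hmem g
  rw [hg] at hg0
  rw [Preadditive.IsIso.comp_left_eq_zero, Preadditive.IsIso.comp_right_eq_zero] at hg0
  have h2 : eA.inv ≫ f ≫ eB.hom = 0 := by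
    apply (shiftFunctor C (-a)).map_injective
    rw [hg0, Functor.map_zero]
  rw [Preadditive.IsIso.comp_left_eq_zero, Preadditive.IsIso.comp_right_eq_zero] at h2
  exact h2

end Aux

/-- Given weight filtrations of `M` and `N` avoiding weights `m, …, n`, any morphism
`α : M ⟶ N` kills the outer composition, and the two evident compositions factor uniquely
through the respective filtrations. -/
theorem weightFiltration_factorisations
    {C : Type u} [Category.{v} C] [Preadditive C] [HasZeroObject C]
    [HasShift C ℤ] [∀ n : ℤ, (shiftFunctor C n).Additive] [Pretriangulated C]
    (w : WeightStructure C) (m n : ℤ) (hmn : m ≤ n)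
    (M N MA MB NA NB : C)
    (xm : MA ⟶ M) (xp : M ⟶ MB) (dM : MB ⟶ MA⟦(1:ℤ)⟧)
    (hM : Triangle.mk xm xp dM ∈ distTriang C)
    (hMA : MA ∈ w.wLE (m - 1)) (hMB : MB ∈ w.wGE (n + 1))
    (ym : NA ⟶ N) (yp : N ⟶ NB) (dN : NB ⟶ NA⟦(1:ℤ)⟧)
    (hN : Triangle.mk ym yp dN ∈ distTriang C)
    (hNA : NA ∈ w.wLE (m - 1)) (hNB : NB ∈ w.wGE (n + 1))
    (α : M ⟶ N) :
    (xm ≫ α ≫ yp = 0) ∧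
    (∃! β : MA ⟶ NA, β ≫ ym = xm ≫ α) ∧
    (∃! γ : MB ⟶ NB, xp ≫ γ = α ≫ yp) := by
  have hzero : xm ≫ α ≫ yp = 0 :=
    w.hom_vanish (by omega) hMA hNB (xm ≫ α ≫ yp)
  have key₁ : ∀ f : MA ⟶ NA, f ≫ ym = 0 → f = 0 := by
    intro f hf
    obtain ⟨g, hg⟩ := Triangle.coyoneda_exact₂ _ (inv_rot_of_distTriang _ hN) f hf
    have hNB' : ((Triangle.mk ym yp dN).invRotate.obj₁ : C) ∈ w.wGE n :=
      shiftedSet_shift (-1) n (by ring) hNB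
    rw [hg, w.hom_vanish (show m - 1 < n by omega) hMA hNB' g]
    exact zero_comp
  have key₂ : ∀ f : MB ⟶ NB, xp ≫ f = 0 → f = 0 := by
    intro f hf
    obtain ⟨g, hg⟩ := Triangle.yoneda_exact₃ _ hM f hf
    have hMA' : ((MA⟦(1 : ℤ)⟧ : C)) ∈ w.wLE m := shiftedSet_shift 1 m (by ring) hMA
    rw [hg, w.hom_vanish (show m < n + 1 by omega) hMA' hNB g]
    exact comp_zero
  refine ⟨hzero, ?_, ?_⟩
  · obtain ⟨β, hβ⟩ := Triangle.coyoneda_exact₂ _ hN (xm ≫ α)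
      (by exact (Category.assoc _ _ _).trans hzero)
    have hβ₀ : xm ≫ α = (show MA ⟶ NA from β) ≫ ym := hβ
    refine ⟨(show MA ⟶ NA from β), hβ₀.symm, fun β' hβ' => ?_⟩
    have h : (β' - (show MA ⟶ NA from β)) ≫ ym = 0 := by
      rw [Preadditive.sub_comp, hβ', hβ₀.symm, sub_self]
    have := key₁ _ h
    rwa [sub_eq_zero] at this
  · obtain ⟨γ, hγ⟩ := Triangle.yoneda_exact₂ _ hM (α ≫ yp)
      (by exact hzero)
    have hγ₀ : α ≫ yp = xp ≫ (show MB ⟶ NB from γ) := hγ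
    refine ⟨(show MB ⟶ NB from γ), hγ₀.symm, fun γ' hγ' => ?_⟩
    have h : xp ≫ (γ' - (show MB ⟶ NB from γ)) = 0 := by
      rw [Preadditive.comp_sub, hγ', hγ₀.symm, sub_self]
    have := key₂ _ h
    rwa [sub_eq_zero] at this
end
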